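/- Let f = f_A + f_R : [0,∞) → ℝ be continuous, and assume there exist 0 < d_a < d_e such that f(ρ) > 0 for all ρ ∈ [0,d_a) and f is strictly decreasing on [0,d_e]. Define ḡ(r) = ∫₀^π f(r |sin φ|) (1 − cos φ) |cos φ| dφ and assume ḡ(d_e) < 0. Then ḡ is strictly decreasing on [0,d_e], ḡ(r) > 0 for all r ∈ (0,d_a], and there exists a unique r̄ ∈ (0,d_e) with ḡ(r̄) = 0; moreover r̄ ∈ (d_a, d_e). -/

import Mathlib

open Real

/-- `ḡ(r) = ∫₀^π f(r |sin φ|) (1 − cos φ) |cos φ| dφ`, the necessary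
condition functional for the degenerate pseudo-ellipse (vertical segment)
state. -/
noncomputable def gbar (f : ℝ → ℝ) (r : ℝ) : ℝ :=
  ∫ φ in (0:ℝ)..Real.pi, f (r * |Real.sin φ|) * (1 - Real.cos φ) * |Real.cos φ|

/-- If `f = f_A + f_R` is continuous, positive on `[0,d_a)` and
strictly decreasing on `[0,d_e]` with `0 < d_a < d_e`, and `ḡ(d_e) < 0`, then
`ḡ` is strictly decreasing on `[0,d_e]`, positive on `(0,d_a]`, and there is
a unique `r̄ ∈ (0,d_e)` with `ḡ(r̄) = 0`; moreover `r̄ ∈ (d_a,d_e)`. -/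
theorem pseudo_ellipse_condition
    (f : ℝ → ℝ) (hf : ContinuousOn f (Set.Ici 0))
    (da de : ℝ) (hda : 0 < da) (hdade : da < de)
    (hpos : ∀ ρ ∈ Set.Ico (0:ℝ) da, 0 < f ρ)
    (hdec : StrictAntiOn f (Set.Icc 0 de))
    (hgde : gbar f de < 0) :
    StrictAntiOn (gbar f) (Set.Icc 0 de)
      ∧ (∀ r ∈ Set.Ioc (0:ℝ) da, 0 < gbar f r)
      ∧ ∃ rbar : ℝ, rbar ∈ Set.Ioo (0:ℝ) de ∧ gbar f rbar = 0
          ∧ (∀ r ∈ Set.Ioo (0:ℝ) de, gbar f r = 0 → r = rbar)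
          ∧ rbar ∈ Set.Ioo da de := by
  -- Extend `f` continuously to all of `ℝ`.
  set F : ℝ → ℝ := fun ρ => f (max ρ 0) with hFdef
  have hFcont : Continuous F :=
    hf.comp_continuous (continuous_id.max continuous_const) (fun x => Set.mem_Ici.2 (le_max_right _ _))
  have hFeq : ∀ ρ : ℝ, 0 ≤ ρ → F ρ = f ρ := by
    intro ρ hρ; simp [hFdef, max_eq_left hρ]
  -- The integrand with `F` in place of `f`.
  set K : ℝ → ℝ → ℝ :=
    fun r φ => F (r * |Real.sin φ|) * (1 - Real.cos φ) * |Real.cos φ| with hKdef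
  have hKcont : Continuous (Function.uncurry K) := by
    apply Continuous.mul
    apply Continuous.mul
    · exact hFcont.comp (continuous_fst.mul (Real.continuous_sin.comp continuous_snd).abs)
    · exact continuous_const.sub (Real.continuous_cos.comp continuous_snd)
    · exact (Real.continuous_cos.comp continuous_snd).abs
  set G : ℝ → ℝ := fun r => ∫ φ in (0:ℝ)..Real.pi, K r φ with hGdef
  have hKr : ∀ r : ℝ, Continuous fun φ => K r φ := by
    intro r
    exact hKcont.comp (Continuous.prodMk_right r)
  have hGcont : Continuous G :=
    intervalIntegral.continuous_parametric_intervalIntegral_of_continuous' hKcont 0 Real.pi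
  have hgbar_eq : ∀ r : ℝ, 0 ≤ r → gbar f r = G r := by
    intro r hr
    unfold gbar
    apply intervalIntegral.integral_congr
    intro φ _
    show f (r * |Real.sin φ|) * (1 - Real.cos φ) * |Real.cos φ| = K r φ
    simp only [hKdef]
    rw [hFeq _ (mul_nonneg hr (abs_nonneg _))]
  have habs_sin : ∀ φ : ℝ, |Real.sin φ| ≤ 1 := fun φ =>
    abs_le.2 ⟨Real.neg_one_le_sin φ, Real.sin_le_one φ⟩
  have hsqrt2 : Real.sqrt 2 < 2 := by
    nlinarith [Real.sq_sqrt (by norm_num : (2:ℝ) ≥ 0), Real.sqrt_nonneg 2]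
  have hs4 : (0:ℝ) < Real.sqrt 2 / 2 := by positivity
  have hs4' : Real.sqrt 2 / 2 < 1 := by linarith
  have hpi4 : Real.pi / 4 ∈ Set.Icc (0:ℝ) Real.pi := by
    constructor <;> nlinarith [Real.pi_pos]
  -- `G` is strictly decreasing on `[0, de]`.
  have hanti : StrictAntiOn G (Set.Icc 0 de) := by
    intro a ha b hb hab
    have hmem : ∀ c : ℝ, c ∈ Set.Icc (0:ℝ) de → ∀ s : ℝ, 0 ≤ s → s ≤ 1 →
        c * s ∈ Set.Icc (0:ℝ) de := by
      intro c hc s hs hs1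
      exact ⟨mul_nonneg hc.1 hs, le_trans (mul_le_of_le_one_right hc.1 hs1) hc.2⟩
    apply intervalIntegral.integral_lt_integral_of_continuousOn_of_le_of_exists_lt Real.pi_pos
      (hKr b).continuousOn (hKr a).continuousOn
    · intro φ _
      have h1 : a * |Real.sin φ| ≤ b * |Real.sin φ| :=
        mul_le_mul_of_nonneg_right hab.le (abs_nonneg _)
      have hFle : F (b * |Real.sin φ|) ≤ F (a * |Real.sin φ|) := by
        rw [hFeq _ (mul_nonneg hb.1 (abs_nonneg _)), hFeq _ (mul_nonneg ha.1 (abs_nonneg _))]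
        exact hdec.antitoneOn (hmem a ha _ (abs_nonneg _) (habs_sin φ))
          (hmem b hb _ (abs_nonneg _) (habs_sin φ)) h1
      exact mul_le_mul_of_nonneg_right
        (mul_le_mul_of_nonneg_right hFle (by nlinarith [Real.cos_le_one φ]))
        (abs_nonneg _)
    · refine ⟨Real.pi / 4, hpi4, ?_⟩
      have hsin : |Real.sin (Real.pi / 4)| = Real.sqrt 2 / 2 := by
        rw [Real.sin_pi_div_four]; exact abs_of_pos hs4
      have hcos : Real.cos (Real.pi / 4) = Real.sqrt 2 / 2 := Real.cos_pi_div_four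
      have hFlt : F (b * |Real.sin (Real.pi / 4)|) < F (a * |Real.sin (Real.pi / 4)|) := by
        rw [hFeq _ (mul_nonneg hb.1 (abs_nonneg _)), hFeq _ (mul_nonneg ha.1 (abs_nonneg _))]
        exact hdec (hmem a ha _ (abs_nonneg _) (habs_sin _))
          (hmem b hb _ (abs_nonneg _) (habs_sin _))
          (by rw [hsin]; exact mul_lt_mul_of_pos_right hab hs4)
      have hw1 : (0:ℝ) < 1 - Real.cos (Real.pi / 4) := by rw [hcos]; linarith
      have hw2 : (0:ℝ) < |Real.cos (Real.pi / 4)| := by rw [hcos]; exact abs_pos.2 (ne_of_gt hs4)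
      exact mul_lt_mul_of_pos_right (mul_lt_mul_of_pos_right hFlt hw1) hw2
  -- `G` is positive on `(0, da]`.
  have hGpos : ∀ r ∈ Set.Ioc (0:ℝ) da, 0 < G r := by
    intro r hr
    have key : (∫ φ in (0:ℝ)..Real.pi, (0:ℝ)) < ∫ φ in (0:ℝ)..Real.pi, K r φ := by
      apply intervalIntegral.integral_lt_integral_of_continuousOn_of_le_of_exists_lt Real.pi_pos
        continuousOn_const (hKr r).continuousOn
      · intro φ _
        by_cases hc : Real.cos φ = 0
        · simp [hKdef, hc]
        · have hsin_lt : |Real.sin φ| < 1 := by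
            have h2 : Real.sin φ ^ 2 + Real.cos φ ^ 2 = 1 := Real.sin_sq_add_cos_sq φ
            have hc2 : 0 < Real.cos φ ^ 2 := by positivity
            nlinarith [abs_nonneg (Real.sin φ), sq_abs (Real.sin φ)]
          have hlt : r * |Real.sin φ| < da :=
            lt_of_lt_of_le (mul_lt_of_lt_one_right hr.1 hsin_lt) hr.2
          have hFpos : 0 < F (r * |Real.sin φ|) := by
            rw [hFeq _ (mul_nonneg hr.1.le (abs_nonneg _))]
            exact hpos _ ⟨mul_nonneg hr.1.le (abs_nonneg _), hlt⟩
          exact mul_nonneg (mul_nonneg hFpos.le (by nlinarith [Real.cos_le_one φ]))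
            (abs_nonneg _)
      · refine ⟨Real.pi / 4, hpi4, ?_⟩
        have hsin : |Real.sin (Real.pi / 4)| = Real.sqrt 2 / 2 := by
          rw [Real.sin_pi_div_four]; exact abs_of_pos hs4
        have hcos : Real.cos (Real.pi / 4) = Real.sqrt 2 / 2 := Real.cos_pi_div_four
        have hlt : r * |Real.sin (Real.pi / 4)| < da := by
          rw [hsin]
          exact lt_of_lt_of_le (mul_lt_of_lt_one_right hr.1 hs4') hr.2
        have hFpos : 0 < F (r * |Real.sin (Real.pi / 4)|) := by
          rw [hFeq _ (mul_nonneg hr.1.le (abs_nonneg _))]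
          exact hpos _ ⟨mul_nonneg hr.1.le (abs_nonneg _), hlt⟩
        have hw1 : (0:ℝ) < 1 - Real.cos (Real.pi / 4) := by rw [hcos]; linarith
        have hw2 : (0:ℝ) < |Real.cos (Real.pi / 4)| := by
          rw [hcos]; exact abs_pos.2 (ne_of_gt hs4)
        positivity
    simpa using key
  have hde0 : (0:ℝ) ≤ de := le_trans hda.le (le_trans hdade.le le_rfl)
  have hgbar_anti : StrictAntiOn (gbar f) (Set.Icc 0 de) := by
    intro a ha b hb hab
    rw [hgbar_eq a ha.1, hgbar_eq b hb.1]
    exact hanti ha hb hab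
  have hgbar_pos : ∀ r ∈ Set.Ioc (0:ℝ) da, 0 < gbar f r := by
    intro r hr
    rw [hgbar_eq r hr.1.le]
    exact hGpos r hr
  refine ⟨hgbar_anti, hgbar_pos, ?_⟩
  -- Root via IVT on `[da, de]`.
  have hGda : 0 < G da := hGpos da ⟨hda, le_rfl⟩
  have hGde : G de < 0 := by rw [← hgbar_eq de hde0]; exact hgde
  obtain ⟨rbar, hrmem, hr0⟩ :=
    intermediate_value_Ioo' hdade.le hGcont.continuousOn
      (Set.mem_Ioo.2 ⟨hGde, hGda⟩)
  have hrbar0 : (0:ℝ) < rbar := lt_trans hda hrmem.1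
  refine ⟨rbar, ⟨hrbar0, hrmem.2⟩, ?_, ?_, hrmem⟩
  · rw [hgbar_eq rbar hrbar0.le]; exact hr0
  · intro r hr h0
    have hGr : G r = G rbar := by
      have h1 := hgbar_eq r hr.1.le
      linarith
    exact hanti.injOn ⟨hr.1.le, hr.2.le⟩ ⟨hrbar0.le, hrmem.2.le⟩ hGr
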